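/- Let G be a zero-sum two-by-two game, i.e. Y_t = −X_t for t = 1,2,3,4. Then in every mixed-strategy Nash equilibrium (ν,μ) of G^Q, Player One's expected payoff is exactly P₁^Q(ν,μ) = (X₁ + X₂ + X₃ + X₄)/4. -/

import Mathlib

noncomputable section

open MeasureTheory

local notation "ℍ" => Quaternion ℝ

instance : MeasurableSpace (Quaternion ℝ) := borel _
instance : BorelSpace (Quaternion ℝ) := ⟨rfl⟩

/-- The four real coordinates of a quaternion: `p = π₁(p) + π₂(p)i + π₃(p)j + π₄(p)k`. -/
def piQ (t : Fin 4) (p : ℍ) : ℝ := ![p.re, p.imI, p.imJ, p.imK] t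

/-- The standard inner product on ℍ ≅ ℝ⁴. -/
def qinner (p q : ℍ) : ℝ := ∑ t : Fin 4, piQ t p * piQ t q

/-- The quaternions `i`, `j`, `k`. -/
def qI : ℍ := ⟨0, 1, 0, 0⟩
def qJ : ℍ := ⟨0, 0, 1, 0⟩
def qK : ℍ := ⟨0, 0, 0, 1⟩

/-- A mixed quantum strategy: a Borel probability measure on the unit quaternions. -/
def IsMixed (μ : Measure ℍ) : Prop :=
  IsProbabilityMeasure μ ∧ μ {p : ℍ | ‖p‖ = 1} = 1

/-- Quantum payoff with payoff vector `X`: `P^Q(p,q) = Σ_t π_t(pq)² X_t`. -/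
def payoff (X : Fin 4 → ℝ) (p q : ℍ) : ℝ :=
  ∑ t : Fin 4, (piQ t (p * q)) ^ 2 * X t

/-- Expected payoff of a pair of mixed strategies. -/
def payoffM (X : Fin 4 → ℝ) (ν μ : Measure ℍ) : ℝ :=
  ∫ p, ∫ q, payoff X p q ∂μ ∂ν

/-- Mixed-strategy Nash equilibrium of the quantum game with payoff vectors `X`, `Y`. -/
def IsNash (X Y : Fin 4 → ℝ) (ν μ : Measure ℍ) : Prop :=
  IsMixed ν ∧ IsMixed μ ∧
    (∀ ν' : Measure ℍ, IsMixed ν' → payoffM X ν' μ ≤ payoffM X ν μ) ∧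
    (∀ μ' : Measure ℍ, IsMixed μ' → payoffM Y ν μ' ≤ payoffM Y ν μ)

/-- Equivalence of mixed quantum strategies. -/
def StratEquiv (μ μ' : Measure ℍ) : Prop :=
  ∀ p : ℍ, ‖p‖ = 1 → ∀ t : Fin 4,
    ∫ q, (piQ t (p * q)) ^ 2 ∂μ = ∫ q, (piQ t (p * q)) ^ 2 ∂μ'

/-- Equivalence of pairs of mixed strategies: `(ν,μ) ∼ (ν',μ')` iff there is a unit
quaternion `u` with `ν' ∼ ν·u` and `μ' ∼ u⁻¹·μ`. -/
def PairEquiv (ν μ ν' μ' : Measure ℍ) : Prop :=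
  ∃ u : ℍ, ‖u‖ = 1 ∧
    StratEquiv (Measure.map (fun p => p * u) ν) ν' ∧
    StratEquiv (Measure.map (fun q => u⁻¹ * q) μ) μ'

/-- A generic two-by-two game: all payoffs distinct and all pairwise sums distinct. -/
def Generic (X Y : Fin 4 → ℝ) : Prop :=
  Function.Injective X ∧ Function.Injective Y ∧
    (∀ s t s' t' : Fin 4, s < t → s' < t' → X s + X t = X s' + X t' → s = s' ∧ t = t') ∧
    (∀ s t s' t' : Fin 4, s < t → s' < t' → Y s + Y t = Y s' + Y t' → s = s' ∧ t = t')

/-- `K(p) = π₁(p)π₂(p)π₃(p)π₄(p)`. -/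
def K (p : ℍ) : ℝ := p.re * p.imI * p.imJ * p.imK

/-- Intertwined quadruple of quaternions. -/
def Intertwined (p q r s : ℍ) : Prop :=
  ∃ α : ℝ, α ≠ 0 ∧ ∀ X Y : ℝ, α * K (X • p + Y • q) = K (X • r + Y • s)

/-- Fully intertwined quadruple of quaternions. -/
def FullyIntertwined (p q r s : ℍ) : Prop :=
  Intertwined p q r s ∧ Intertwined p r q s

/-- `p` is an optimal response for Player One to the mixed strategy `μ`. -/
def Optimal₁ (X : Fin 4 → ℝ) (μ : Measure ℍ) (p : ℍ) : Prop :=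
  ‖p‖ = 1 ∧ ∀ p' : ℍ, ‖p'‖ = 1 → ∫ q, payoff X p' q ∂μ ≤ ∫ q, payoff X p q ∂μ

/-- `q` is an optimal response for Player Two to the mixed strategy `ν`. -/
def Optimal₂ (Y : Fin 4 → ℝ) (ν : Measure ℍ) (q : ℍ) : Prop :=
  ‖q‖ = 1 ∧ ∀ q' : ℍ, ‖q'‖ = 1 → ∫ p, payoff Y p q' ∂ν ≤ ∫ p, payoff Y p q ∂ν
section ZeroSumAux

lemma piQ_continuous (t : Fin 4) : Continuous (piQ t) := by
  fin_cases t <;>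
    simp only [piQ, Matrix.cons_val_zero, Matrix.cons_val_one, Matrix.head_cons,
      Matrix.cons_val_two, Matrix.tail_cons, Matrix.cons_val_three, Fin.isValue]
  exacts [Quaternion.continuous_re, Quaternion.continuous_imI,
    Quaternion.continuous_imJ, Quaternion.continuous_imK]

lemma payoff_continuous (X : Fin 4 → ℝ) :
    Continuous (fun pq : ℍ × ℍ => payoff X pq.1 pq.2) := by
  unfold payoff
  exact continuous_finset_sum _ fun t _ =>
    (((piQ_continuous t).comp (continuous_fst.mul continuous_snd)).pow 2).mul continuous_const

lemma sumsq_piQ (r : ℍ) : ∑ t : Fin 4, piQ t r ^ 2 = ‖r‖ ^ 2 := by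
  rw [pow_two, ← Quaternion.normSq_eq_norm_mul_self, Quaternion.normSq_def']
  simp [Fin.sum_univ_four, piQ]

lemma piQ_sq_le (t : Fin 4) (r : ℍ) : piQ t r ^ 2 ≤ ‖r‖ ^ 2 := by
  rw [← sumsq_piQ]
  exact Finset.single_le_sum (fun s _ => sq_nonneg (piQ s r)) (Finset.mem_univ t)

lemma payoff_abs_le (X : Fin 4 → ℝ) (p q : ℍ) :
    |payoff X p q| ≤ ‖p‖ ^ 2 * ‖q‖ ^ 2 * ∑ t : Fin 4, |X t| := by
  calc |payoff X p q| ≤ ∑ t : Fin 4, |piQ t (p * q) ^ 2 * X t| :=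
        Finset.abs_sum_le_sum_abs _ _
    _ ≤ ∑ t : Fin 4, ‖p‖ ^ 2 * ‖q‖ ^ 2 * |X t| := by
        refine Finset.sum_le_sum fun t _ => ?_
        rw [abs_mul, abs_sq]
        have h1 : piQ t (p * q) ^ 2 ≤ ‖p‖ ^ 2 * ‖q‖ ^ 2 := by
          have := piQ_sq_le t (p * q)
          rwa [norm_mul, mul_pow] at this
        exact mul_le_mul_of_nonneg_right h1 (abs_nonneg _)
    _ = ‖p‖ ^ 2 * ‖q‖ ^ 2 * ∑ t : Fin 4, |X t| := by rw [Finset.mul_sum]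

lemma payoff_continuous_right (X : Fin 4 → ℝ) (p : ℍ) :
    Continuous fun q : ℍ => payoff X p q := by
  unfold payoff
  exact continuous_finset_sum _ fun t _ =>
    (((piQ_continuous t).comp (continuous_const.mul continuous_id)).pow 2).mul continuous_const

lemma ae_norm_one {μ : Measure ℍ} (h : IsMixed μ) : ∀ᵐ q ∂μ, ‖q‖ = 1 := by
  have hmeas : MeasurableSet {q : ℍ | ‖q‖ = 1} :=
    (isClosed_eq continuous_norm continuous_const).measurableSet
  haveI := h.1
  rw [ae_iff]
  have heq : {q : ℍ | ¬ ‖q‖ = 1} = {q : ℍ | ‖q‖ = 1}ᶜ := rfl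
  rw [heq, measure_compl hmeas (measure_ne_top _ _), h.2, measure_univ, tsub_self]

lemma payoff_integrable (X : Fin 4 → ℝ) (p : ℍ) {μ : Measure ℍ} (hμ : IsMixed μ) :
    Integrable (fun q => payoff X p q) μ := by
  haveI := hμ.1
  refine Integrable.mono' (integrable_const (‖p‖ ^ 2 * ∑ t : Fin 4, |X t|)) ?_ ?_
  · exact (payoff_continuous_right X p).aestronglyMeasurable
  · filter_upwards [ae_norm_one hμ] with q hq
    have := payoff_abs_le X p q
    rw [hq] at this
    simpa using this

lemma identA (X : Fin 4 → ℝ) (q : ℍ) :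
    payoff X 1 q + payoff X qI q + payoff X qJ q + payoff X qK q
      = ‖q‖ ^ 2 * ∑ t : Fin 4, X t := by
  have h : ‖q‖ ^ 2 = q.re ^ 2 + q.imI ^ 2 + q.imJ ^ 2 + q.imK ^ 2 := by
    rw [pow_two, ← Quaternion.normSq_eq_norm_mul_self, Quaternion.normSq_def']
  simp only [payoff, Fin.sum_univ_four, piQ, Matrix.cons_val_zero, Matrix.cons_val_one,
    Matrix.head_cons, Matrix.cons_val_two, Matrix.tail_cons, Matrix.cons_val_three,
    Quaternion.re_mul, Quaternion.imI_mul, Quaternion.imJ_mul, Quaternion.imK_mul,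
    Quaternion.re_one, Quaternion.imI_one, Quaternion.imJ_one, Quaternion.imK_one,
    h]
  simp only [qI, qJ, qK]
  ring

lemma identB (X : Fin 4 → ℝ) (p : ℍ) :
    payoff X p 1 + payoff X p qI + payoff X p qJ + payoff X p qK
      = ‖p‖ ^ 2 * ∑ t : Fin 4, X t := by
  have h : ‖p‖ ^ 2 = p.re ^ 2 + p.imI ^ 2 + p.imJ ^ 2 + p.imK ^ 2 := by
    rw [pow_two, ← Quaternion.normSq_eq_norm_mul_self, Quaternion.normSq_def']
  simp only [payoff, Fin.sum_univ_four, piQ, Matrix.cons_val_zero, Matrix.cons_val_one,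
    Matrix.head_cons, Matrix.cons_val_two, Matrix.tail_cons, Matrix.cons_val_three,
    Quaternion.re_mul, Quaternion.imI_mul, Quaternion.imJ_mul, Quaternion.imK_mul,
    Quaternion.re_one, Quaternion.imI_one, Quaternion.imJ_one, Quaternion.imK_one,
    h]
  simp only [qI, qJ, qK]
  ring

lemma norm_qI : ‖qI‖ = 1 := by
  have h2 : ‖qI‖ * ‖qI‖ = 1 := by
    rw [← Quaternion.normSq_eq_norm_mul_self]
    rw [Quaternion.normSq_def']; simp [qI]
  nlinarith [norm_nonneg qI]

lemma norm_qJ : ‖qJ‖ = 1 := by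
  have h2 : ‖qJ‖ * ‖qJ‖ = 1 := by
    rw [← Quaternion.normSq_eq_norm_mul_self]
    rw [Quaternion.normSq_def']; simp [qJ]
  nlinarith [norm_nonneg qJ]

lemma norm_qK : ‖qK‖ = 1 := by
  have h2 : ‖qK‖ * ‖qK‖ = 1 := by
    rw [← Quaternion.normSq_eq_norm_mul_self]
    rw [Quaternion.normSq_def']; simp [qK]
  nlinarith [norm_nonneg qK]

/-- The uniform mixed strategy on `{1, i, j, k}`. -/
def unif4 : Measure ℍ :=
  (4 : ENNReal)⁻¹ • (Measure.dirac 1 + Measure.dirac qI + Measure.dirac qJ + Measure.dirac qK)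

lemma unif4_apply_of_mem {s : Set ℍ} (h1 : (1 : ℍ) ∈ s) (hI : qI ∈ s) (hJ : qJ ∈ s)
    (hK : qK ∈ s) : unif4 s = 1 := by
  simp only [unif4, Measure.smul_apply, Measure.add_apply,
    Measure.dirac_apply_of_mem h1, Measure.dirac_apply_of_mem hI,
    Measure.dirac_apply_of_mem hJ, Measure.dirac_apply_of_mem hK, smul_eq_mul]
  rw [show (1:ENNReal)+1+1+1 = 4 by norm_num]
  exact ENNReal.inv_mul_cancel (by norm_num) (by norm_num)

lemma unif4_mixed : IsMixed unif4 := by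
  constructor
  · exact ⟨unif4_apply_of_mem trivial trivial trivial trivial⟩
  · exact unif4_apply_of_mem norm_one norm_qI norm_qJ norm_qK

lemma integrable_dirac_of_sm {f : ℍ → ℝ} (hf : StronglyMeasurable f) (a : ℍ) :
    Integrable f (Measure.dirac a) := by
  refine ⟨hf.aestronglyMeasurable, ?_⟩
  rw [HasFiniteIntegral, lintegral_dirac]
  exact ENNReal.coe_lt_top

lemma integral_unif4 {f : ℍ → ℝ} (hf : StronglyMeasurable f) :
    ∫ x, f x ∂unif4 = (f 1 + f qI + f qJ + f qK) / 4 := by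
  have hi : ∀ a : ℍ, Integrable f (Measure.dirac a) := integrable_dirac_of_sm hf
  rw [unif4, integral_smul_measure,
    integral_add_measure (((hi 1).add_measure (hi qI)).add_measure (hi qJ)) (hi qK),
    integral_add_measure ((hi 1).add_measure (hi qI)) (hi qJ),
    integral_add_measure (hi 1) (hi qI),
    integral_dirac f 1, integral_dirac f qI, integral_dirac f qJ, integral_dirac f qK]
  simp only [smul_eq_mul, ENNReal.toReal_inv]
  norm_num
  ring

end ZeroSumAux
/-- In every mixed-strategy quantum Nash equilibrium of a zero-sum game,
Player One earns exactly the average `(X₁ + X₂ + X₃ + X₄)/4`. -/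
theorem zero_sum_nash_payoff_eq_average (X Y : Fin 4 → ℝ) (hzero : ∀ t, Y t = -X t)
    (ν μ : Measure ℍ) (hnash : IsNash X Y ν μ) :
    payoffM X ν μ = (∑ t : Fin 4, X t) / 4 := by
  obtain ⟨hν, hμ, h1, h2⟩ := hnash
  haveI := hν.1
  haveI := hμ.1
  -- Player One can guarantee the average by playing `unif4`.
  have hg : StronglyMeasurable fun p => ∫ q, payoff X p q ∂μ :=
    (payoff_continuous X).stronglyMeasurable.integral_prod_right'
  have hlow : payoffM X unif4 μ = (∑ t : Fin 4, X t) / 4 := by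
    rw [payoffM, integral_unif4 hg]
    have i1 := payoff_integrable X 1 hμ
    have i2 := payoff_integrable X qI hμ
    have i3 := payoff_integrable X qJ hμ
    have i4 := payoff_integrable X qK hμ
    have i12 : Integrable (fun q => payoff X 1 q + payoff X qI q) μ := i1.add i2
    have i123 : Integrable (fun q => payoff X 1 q + payoff X qI q + payoff X qJ q) μ :=
      i12.add i3
    have hsum : ∫ q, (payoff X 1 q + payoff X qI q + payoff X qJ q + payoff X qK q) ∂μ
        = (∫ q, payoff X 1 q ∂μ) + (∫ q, payoff X qI q ∂μ) + (∫ q, payoff X qJ q ∂μ)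
        + (∫ q, payoff X qK q ∂μ) := by
      rw [integral_add i123 i4, integral_add i12 i3, integral_add i1 i2]
    rw [← hsum]
    have : ∫ q, (payoff X 1 q + payoff X qI q + payoff X qJ q + payoff X qK q) ∂μ
        = ∫ _q, (∑ t : Fin 4, X t) ∂μ := by
      refine integral_congr_ae ?_
      filter_upwards [ae_norm_one hμ] with q hq
      rw [identA, hq, one_pow, one_mul]
    rw [this, integral_const, probReal_univ, one_smul]
  -- Player Two can guarantee minus the average by playing `unif4`.
  have hup : payoffM Y ν unif4 = -((∑ t : Fin 4, X t) / 4) := by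
    rw [payoffM]
    have hinner : ∀ p : ℍ, ∫ q, payoff Y p q ∂unif4 = ‖p‖ ^ 2 * (∑ t : Fin 4, Y t) / 4 := by
      intro p
      rw [integral_unif4 (payoff_continuous_right Y p).stronglyMeasurable, identB]
    simp_rw [hinner]
    have : ∫ p, ‖p‖ ^ 2 * (∑ t : Fin 4, Y t) / 4 ∂ν
        = ∫ _p, (∑ t : Fin 4, Y t) / 4 ∂ν := by
      refine integral_congr_ae ?_
      filter_upwards [ae_norm_one hν] with p hp
      rw [hp, one_pow, one_mul]
    rw [this, integral_const, probReal_univ, one_smul]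
    have : ∑ t : Fin 4, Y t = -∑ t : Fin 4, X t := by
      simp [hzero]
    rw [this]
    ring
  -- payoffM Y ν μ = - payoffM X ν μ
  have hneg : payoffM Y ν μ = -payoffM X ν μ := by
    have hpq : ∀ p q : ℍ, payoff Y p q = -payoff X p q := by
      intro p q
      simp [payoff, hzero, mul_neg, Finset.sum_neg_distrib]
    simp only [payoffM]
    simp_rw [hpq, integral_neg]
  have hA : (∑ t : Fin 4, X t) / 4 ≤ payoffM X ν μ := hlow ▸ h1 unif4 unif4_mixed
  have hB : -((∑ t : Fin 4, X t) / 4) ≤ -payoffM X ν μ := by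
    rw [← hneg, ← hup]; exact h2 unif4 unif4_mixed
  linarith
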